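/- Let C be a connected chordal graph, X a vertex of C, and π = (X, v_1, ..., v_n) a chordless path starting at X with length at least 2. In any v-structure-free acyclic orientation of C in which X is the unique source, π is oriented as a directed path away from X. -/

import Mathlib

variable {V : Type*}

/-- A list of vertices is a path in `G`: all vertices distinct and consecutive
vertices adjacent. -/
def IsListPath (G : SimpleGraph V) (p : List V) : Prop :=
  p.Nodup ∧ p.Chain' G.Adj

/-- A chord of a path: an edge of `G` joining two nonconsecutive vertices on the path. -/
def PathHasChord (G : SimpleGraph V) (p : List V) : Prop :=
  ∃ (i j : ℕ) (hi : i < p.length) (hj : j < p.length),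
    i + 1 < j ∧ G.Adj (p.get ⟨i, hi⟩) (p.get ⟨j, hj⟩)

/-- A path is triangle-free if no three consecutive vertices on it are pairwise
adjacent, i.e. `v i` is never adjacent to `v (i+2)`. -/
def PathTriangleFree (G : SimpleGraph V) (p : List V) : Prop :=
  ∀ (i : ℕ) (h : i + 2 < p.length),
    ¬ G.Adj (p.get ⟨i, by omega⟩) (p.get ⟨i + 2, h⟩)

/-- A list of (at least three) distinct vertices forming a cycle of `G`:
consecutive vertices adjacent and the last vertex adjacent to the first.
Its length (number of edges) is `p.length`. -/
def IsListCycle (G : SimpleGraph V) (p : List V) : Prop :=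
  3 ≤ p.length ∧ p.Nodup ∧ p.Chain' G.Adj ∧
    ∃ h : p ≠ [], G.Adj (p.getLast h) (p.head h)

/-- A chord of a cycle: an edge joining two cyclically nonconsecutive vertices. -/
def CycleHasChord (G : SimpleGraph V) (p : List V) : Prop :=
  ∃ (i j : ℕ) (hi : i < p.length) (hj : j < p.length),
    i + 1 < j ∧ ¬ (i = 0 ∧ j = p.length - 1) ∧
      G.Adj (p.get ⟨i, hi⟩) (p.get ⟨j, hj⟩)

/-- A chordal graph: every cycle of length greater than three has a chord. -/
def IsChordal (G : SimpleGraph V) : Prop :=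
  ∀ p : List V, IsListCycle G p → 3 < p.length → CycleHasChord G p

/-- `E` is an orientation of the edges of `G`: every edge gets exactly one
direction, and directed edges only occur where `G` has edges. -/
def IsOrientation (G : SimpleGraph V) (E : V → V → Prop) : Prop :=
  (∀ a b, E a b → G.Adj a b) ∧
  (∀ a b, G.Adj a b → (E a b ∨ E b a)) ∧
  (∀ a b, ¬ (E a b ∧ E b a))

/-- An acyclic directed relation: no directed cycles. -/
def OrientAcyclic (E : V → V → Prop) : Prop := ∀ a, ¬ Relation.TransGen E a a

/-- A v-structure-free orientation: no vertex has two non-adjacent parents. -/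
def VSFree (G : SimpleGraph V) (E : V → V → Prop) : Prop :=
  ∀ a b c, E a b → E c b → a ≠ c → G.Adj a c

/-- A source: a vertex with no incoming directed edge. -/
def IsSource (E : V → V → Prop) (v : V) : Prop := ∀ a, ¬ E a v

/-- In a connected chordal graph, any chordless path of length at least 2
starting at the unique source `x` of a v-structure-free acyclic orientation is
oriented as a directed path away from `x`. -/
theorem stmt16 (G : SimpleGraph V) (hG : IsChordal G) (hconn : G.Connected)
    (E : V → V → Prop) (hor : IsOrientation G E) (hac : OrientAcyclic E)
    (hvs : VSFree G E) (x : V) (hsrc : IsSource E x)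
    (huniq : ∀ s, IsSource E s → s = x)
    (p : List V) (hp : IsListPath G p) (hchordless : ¬ PathHasChord G p)
    (hhead : p.head? = some x) (hlen : 3 ≤ p.length) :
    p.Chain' E := by
  obtain ⟨hnd, hch⟩ := hp
  simp only [List.Chain', List.isChain_iff_getElem] at hch ⊢
  have key : ∀ i (h : i + 1 < p.length), E (p.get ⟨i, by omega⟩) (p.get ⟨i+1, h⟩) := by
    intro i
    induction i with
    | zero =>
      intro h
      have hne : p ≠ [] := by intro hc; simp [hc] at h
      have hx : p.get ⟨0, by omega⟩ = x := by
        rw [List.head?_eq_head hne] at hhead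
        simp only [List.get_eq_getElem]
        rw [show (p[0] = x) = (p.head hne = x) by rw [← List.getElem_zero (l := p) (by omega)]]
        exact Option.some.inj hhead
      have hadj := hch 0 (by omega)
      rcases hor.2.1 _ _ hadj with he | he
      · exact he
      · exact absurd (hx ▸ (show E p[0+1] (p.get ⟨0, by omega⟩) from he)) (hsrc _)
    | succ i ih =>
      intro h
      have h1 : i + 1 < p.length := by omega
      have hprev := ih h1
      have hadj := hch (i+1) (by omega)
      rcases hor.2.1 _ _ hadj with he | he
      · exact he
      · exfalso
        have hne : p.get ⟨i, by omega⟩ ≠ p.get ⟨i+2, by omega⟩ := by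
          intro hc
          have := List.Nodup.get_inj_iff hnd |>.mp hc
          simp at this
        have hadj2 : G.Adj (p.get ⟨i, by omega⟩) (p.get ⟨i+2, by omega⟩) :=
          hvs _ _ _ hprev he hne
        exact hchordless ⟨i, i+2, by omega, by omega, by omega, hadj2⟩
  intro i h
  exact key i (by omega)
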